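/- Let M be a finite monoid. Define a relation ⪯ on M as the least preorder such that for every idempotent e ∈ M, every s in a fixed set P of 'pair partners' of e (i.e., (e,s) ∈ R for a fixed relation R ⊆ E(M)×M), and all x,y ∈ M, we have x e y ⪯ x e s e y. Suppose M satisfies: for every (e,s) ∈ R and every t ∈ M, (eset)^{ω+1} = (eset)^ω e t (eset)^ω. Then for all q, s ∈ M with q ⪯ s, we have s^{ω+1} = s^ω q s^ω. -/
import Mathlib

private lemma mul_pow_shift {M : Type*} [Monoid M] (b c : M) (k : ℕ) :
    (b * c) ^ (k + 1) = b * ((c * b) ^ k * c) := by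
  induction k with
  | zero => simp
  | succ k ih =>
    rw [pow_succ (b * c) (k + 1), ih, pow_succ (c * b) k]
    simp only [mul_assoc]

private lemma step_lemma {M : Type*} [Monoid M] (m : ℕ) (e s' X Y Z : M)
    (hidem : ∀ w : M, IsIdempotentElem (w ^ (m + 1)))
    (hq : (e * s' * e * (Y * X)) ^ (m + 1 + 1)
      = (e * s' * e * (Y * X)) ^ (m + 1) * (e * (Y * X)) * (e * s' * e * (Y * X)) ^ (m + 1))
    (ih : ∀ u' v' : M, (u' * (X * (e * Y)) * v') ^ (m + 1 + 1)
      = (u' * (X * (e * Y)) * v') ^ (m + 1) * (u' * Z * v')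
          * (u' * (X * (e * Y)) * v') ^ (m + 1)) :
    (X * (e * s' * e * Y)) ^ (m + 1 + 1)
      = (X * (e * s' * e * Y)) ^ (m + 1) * Z * (X * (e * s' * e * Y)) ^ (m + 1) := by
  have hq2 : ((e * s' * e * Y) * X) ^ (m + 1 + 1)
      = ((e * s' * e * Y) * X) ^ (m + 1) * (e * (Y * X)) * ((e * s' * e * Y) * X) ^ (m + 1) := by
    simpa only [mul_assoc] using hq
  set B := e * s' * e * Y with hB
  set C := X * (e * Y) with hC
  set P := X * B with hP
  set G := B * X with hG
  have hpow : ∀ k, P ^ (k + 1) = X * (G ^ k * B) := fun k => mul_pow_shift X B k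
  have hP2 : P ^ (m + 1) * P ^ (m + 1) = P ^ (m + 1) := (hidem P).eq
  have h1 : P ^ (m + 1) * C = X * (G ^ (m + 1) * (e * Y)) := by
    rw [hpow m, hC, pow_succ, hG]
    simp only [mul_assoc]
  have h2 : P ^ (m + 1) * C * P ^ (m + 1 + 1) = P ^ (m + 1 + 1 + 1) := by
    calc P ^ (m + 1) * C * P ^ (m + 1 + 1)
        = (X * (G ^ (m + 1) * (e * Y))) * (X * (G ^ (m + 1) * B)) := by
          rw [h1, hpow (m + 1)]
      _ = X * ((G ^ (m + 1) * (e * (Y * X)) * G ^ (m + 1)) * B) := by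
          rw [hG]; simp only [mul_assoc]
      _ = X * (G ^ (m + 1 + 1) * B) := by rw [← hq2]
      _ = P ^ (m + 1 + 1 + 1) := (hpow (m + 1 + 1)).symm
  have hstep2 : P ^ (m + 1) * P ^ (m + 1) = P ^ (m + 1 + 1) * P ^ m := by
    have hexp : (m + 1) + (m + 1) = (m + 1 + 1) + m := by omega
    rw [← pow_add, ← pow_add, hexp]
  have h3 : P ^ (m + 1) * C * P ^ (m + 1) = P ^ (m + 1 + 1) := by
    calc P ^ (m + 1) * C * P ^ (m + 1)
        = P ^ (m + 1) * C * (P ^ (m + 1) * P ^ (m + 1)) := by rw [hP2]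
      _ = P ^ (m + 1) * C * (P ^ (m + 1 + 1) * P ^ m) := by rw [hstep2]
      _ = (P ^ (m + 1) * C * P ^ (m + 1 + 1)) * P ^ m := by simp only [mul_assoc]
      _ = P ^ (m + 1 + 1 + 1) * P ^ m := by rw [h2]
      _ = P ^ (m + 1) * P ^ (m + 1) * P := by
          have hexp : (m + 1 + 1 + 1) + m = ((m + 1) + (m + 1)) + 1 := by omega
          rw [← pow_add, hexp, pow_add, pow_add, pow_one]
      _ = P ^ (m + 1) * P := by rw [hP2]
      _ = P ^ (m + 1 + 1) := (pow_succ P (m + 1)).symm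
  have hFF := ih (P ^ (m + 1)) (P ^ (m + 1))
  rw [h3] at hFF
  have hr1 : (P ^ (m + 1 + 1)) ^ (m + 1) = P ^ (m + 1) := by
    rw [← pow_mul]
    have hexp : (m + 1 + 1) * (m + 1) = (m + 1) * (m + 1 + 1) := by ring
    rw [hexp, pow_mul]
    exact IsIdempotentElem.pow_succ_eq (m + 1) (hidem P)
  have hr2 : (P ^ (m + 1 + 1)) ^ (m + 1 + 1) = P ^ (m + 1 + 1) := by
    rw [pow_succ, hr1, pow_succ P (m + 1), ← mul_assoc, hP2]
  rw [hr1, hr2] at hFF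
  rw [hFF]
  calc P ^ (m + 1) * (P ^ (m + 1) * Z * P ^ (m + 1)) * P ^ (m + 1)
      = (P ^ (m + 1) * P ^ (m + 1)) * Z * (P ^ (m + 1) * P ^ (m + 1)) := by
        simp only [mul_assoc]
    _ = P ^ (m + 1) * Z * P ^ (m + 1) := by rw [hP2]

/-- Lemma `trclos`/`eqformu`: let `M` be a finite monoid, `R` a relation whose
pairs `(e,s)` have idempotent first component, and `⪯` the least preorder such
that `x e y ⪯ x e s e y` for all `(e,s) ∈ R` and `x, y ∈ M`. If `M` satisfies
`(eset)^{ω+1} = (eset)^ω et (eset)^ω` for all `(e,s) ∈ R` and all `t`, then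
`q ⪯ s` implies `s^{ω+1} = s^ω q s^ω`. -/
theorem stmt_5 {M : Type*} [Monoid M] [Fintype M]
    (R : M → M → Prop) (hR : ∀ e s : M, R e s → IsIdempotentElem e)
    (n : ℕ) (hn : 0 < n) (hidem : ∀ m : M, IsIdempotentElem (m ^ n))
    (heq : ∀ e s t : M, R e s →
      (e * s * e * t) ^ (n + 1)
        = (e * s * e * t) ^ n * (e * t) * (e * s * e * t) ^ n)
    (q s : M)
    (hqs : Relation.ReflTransGen
      (fun a b : M => ∃ e s' x y : M, R e s' ∧ a = x * e * y ∧
        b = x * e * s' * e * y) q s) :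
    s ^ (n + 1) = s ^ n * q * s ^ n := by
  obtain ⟨m, rfl⟩ : ∃ m, n = m + 1 := ⟨n - 1, (Nat.succ_pred_eq_of_pos hn).symm⟩
  suffices h : ∀ u v : M, (u * s * v) ^ (m + 1 + 1)
      = (u * s * v) ^ (m + 1) * (u * q * v) * (u * s * v) ^ (m + 1) by
    simpa using h 1 1
  induction hqs with
  | refl =>
    intro u v
    have hP2 := (hidem (u * q * v)).eq
    symm
    calc (u * q * v) ^ (m + 1) * (u * q * v) * (u * q * v) ^ (m + 1)
        = (u * q * v) ^ (m + 1 + 1) * (u * q * v) ^ (m + 1) := by rw [← pow_succ]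
      _ = ((u * q * v) * (u * q * v) ^ (m + 1)) * (u * q * v) ^ (m + 1) := by rw [pow_succ']
      _ = (u * q * v) * ((u * q * v) ^ (m + 1) * (u * q * v) ^ (m + 1)) := by rw [mul_assoc]
      _ = (u * q * v) * (u * q * v) ^ (m + 1) := by rw [hP2]
      _ = (u * q * v) ^ (m + 1 + 1) := (pow_succ' _ _).symm
  | @tail b c hqb hbc ih =>
    obtain ⟨e, t', x, y, hR', rfl, rfl⟩ := hbc
    intro u v
    have core := step_lemma m e t' (u * x) (y * v) (u * q * v) hidem
      (heq e t' ((y * v) * (u * x)) hR')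
      (fun u' v' => by simpa only [mul_assoc] using ih (u' * u) (v * v'))
    simpa only [mul_assoc] using core
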